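/- Let f : ℝ^d × ℝ^n → ℝ^d be continuous, L-Lipschitz in the state, and odd in the action, let a : [0,2] → ℝ^n be a continuous action curve satisfying the reversal condition a(1+t) = -a(1-t) for all t ∈ [0,1], and let x : [0,2] → ℝ^d be differentiable with x'(t) = f(x(t), a(t)) for all t ∈ [0,2]. Then x(1+t) = x(1-t) for all t ∈ [0,1]; in particular x(2) = x(0), i.e. running the reversed action sequence returns the system exactly to its initial state. -/

import Mathlib

open Set

/-- **Trajectory Reversibility (continuous time).**
If `f` is continuous, `L`-Lipschitz in the state and odd in the action, the
action curve `a` is continuous on `[0,2]` and satisfies the reversal condition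
`a (1+t) = -a (1-t)` on `[0,1]`, and `x` solves `x' = f (x t, a t)` on `[0,2]`,
then `x (1+t) = x (1-t)` for all `t ∈ [0,1]`; in particular `x 2 = x 0`. -/
theorem trajectory_reversibility
    {d n : ℕ} (f : EuclideanSpace ℝ (Fin d) × EuclideanSpace ℝ (Fin n) → EuclideanSpace ℝ (Fin d))
    (L : ℝ)
    (hf_cont : Continuous f)
    (hf_lip : ∀ (x x' : EuclideanSpace ℝ (Fin d)) (a : EuclideanSpace ℝ (Fin n)),
      ‖f (x, a) - f (x', a)‖ ≤ L * ‖x - x'‖)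
    (hf_odd : ∀ (x : EuclideanSpace ℝ (Fin d)) (a : EuclideanSpace ℝ (Fin n)),
      f (x, -a) = -f (x, a))
    (a : ℝ → EuclideanSpace ℝ (Fin n))
    (ha_cont : ContinuousOn a (Icc 0 2))
    (ha_rev : ∀ t ∈ Icc (0:ℝ) 1, a (1 + t) = -a (1 - t))
    (x : ℝ → EuclideanSpace ℝ (Fin d))
    (hx : ∀ t ∈ Icc (0:ℝ) 2, HasDerivAt x (f (x t, a t)) t) :
    (∀ t ∈ Icc (0:ℝ) 1, x (1 + t) = x (1 - t)) ∧ x 2 = x 0 := by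
  set K : NNReal := L.toNNReal with hK
  set v : ℝ → EuclideanSpace ℝ (Fin d) → EuclideanSpace ℝ (Fin d) :=
    fun t u => f (u, a (1 + t)) with hv_def
  have hv : ∀ t, LipschitzOnWith K (v t) (univ : Set (EuclideanSpace ℝ (Fin d))) := by
    intro t
    apply LipschitzWith.lipschitzOnWith
    apply LipschitzWith.of_dist_le_mul
    intro p q
    simp only [hv_def, dist_eq_norm]
    calc ‖f (p, a (1 + t)) - f (q, a (1 + t))‖ ≤ L * ‖p - q‖ := hf_lip p q _
      _ ≤ K * ‖p - q‖ := by
          apply mul_le_mul_of_nonneg_right (Real.le_coe_toNNReal L) (norm_nonneg _)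
  set y : ℝ → EuclideanSpace ℝ (Fin d) := fun t => x (1 + t) with hy_def
  set z : ℝ → EuclideanSpace ℝ (Fin d) := fun t => x (1 - t) with hz_def
  have hmem1 : ∀ t ∈ Icc (0:ℝ) 1, (1 + t) ∈ Icc (0:ℝ) 2 := by
    intro t ht; constructor <;> [linarith [ht.1]; linarith [ht.2]]
  have hmem2 : ∀ t ∈ Icc (0:ℝ) 1, (1 - t) ∈ Icc (0:ℝ) 2 := by
    intro t ht; constructor <;> [linarith [ht.2]; linarith [ht.1]]
  have hy' : ∀ t ∈ Icc (0:ℝ) 1, HasDerivAt y (v t (y t)) t := by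
    intro t ht
    exact (hx (1 + t) (hmem1 t ht)).comp_const_add 1 t
  have hz' : ∀ t ∈ Icc (0:ℝ) 1, HasDerivAt z (v t (z t)) t := by
    intro t ht
    have h1 : HasDerivAt z (-(f (x (1 - t), a (1 - t)))) t :=
      (hx (1 - t) (hmem2 t ht)).comp_const_sub 1 t
    have h2 : v t (z t) = -(f (x (1 - t), a (1 - t))) := by
      simp only [hv_def, hz_def, ha_rev t ht, hf_odd]
    rw [h2]; exact h1
  have hcy : ContinuousOn y (Icc 0 1) := fun t ht =>
    ((hy' t ht).continuousAt).continuousWithinAt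
  have hcz : ContinuousOn z (Icc 0 1) := fun t ht =>
    ((hz' t ht).continuousAt).continuousWithinAt
  have heq0 : y 0 = z 0 := by simp [hy_def, hz_def]
  have main : EqOn y z (Icc 0 1) :=
    ODE_solution_unique_of_mem_Icc_right (s := fun _ => univ) (fun t _ => hv t) hcy
      (fun t ht => (hy' t (Ico_subset_Icc_self ht)).hasDerivWithinAt)
      (fun t _ => mem_univ _) hcz
      (fun t ht => (hz' t (Ico_subset_Icc_self ht)).hasDerivWithinAt)
      (fun t _ => mem_univ _) heq0
  refine ⟨fun t ht => main ht, ?_⟩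
  have := main (right_mem_Icc.mpr zero_le_one)
  norm_num [hy_def, hz_def] at this; exact this
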